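/- For every f : ℕ → ℝ one has ‖f‖_𝔹 ≤ ∑_{n} |f(n)| as elements of [0,∞]. If f(n) ≥ 0 for all n, then ‖f‖_𝔹 = ∑_{n} f(n). Moreover, every f with ∑_{n} |f(n)| < ∞ belongs to 𝔹₀. -/

import Mathlib

open Filter ENNReal
open scoped Classical

noncomputable section

/-- Coordinate projection onto a finite set of indices. -/
def proj (A : Finset ℕ) (f : ℕ → ℝ) : ℕ → ℝ := fun n => if n ∈ A then f n else 0

/-- Coordinate projection onto a set of indices. -/
def projSet (A : Set ℕ) (f : ℕ → ℝ) : ℕ → ℝ := fun n => if n ∈ A then f n else 0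

/-- `𝟙*_A(f) = ∑_{n ∈ A} f n`. -/
def oneStar (f : ℕ → ℝ) (A : Finset ℕ) : ℝ := ∑ n ∈ A, f n

/-- `A` is a greedy set of `f`. -/
def GreedySet (f : ℕ → ℝ) (A : Finset ℕ) : Prop :=
  ∀ n ∈ A, ∀ k, k ∉ A → |f k| ≤ |f n|

/-- `β(f,A) = sup_{I ∈ ℐ} |𝟙*_{I∖A}(f)| ∈ [0,∞]`, the sup running over all finite
integer intervals `I = [a,b]`. -/
def beta (f : ℕ → ℝ) (A : Finset ℕ) : ℝ≥0∞ :=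
  ⨆ a : ℕ, ⨆ b : ℕ, ENNReal.ofReal |oneStar f (Finset.Icc a b \ A)|

/-- `‖f‖_𝔹 = sup_{A ∈ 𝒢(f)} β(f,A) ∈ [0,∞]`. -/
def BNorm (f : ℕ → ℝ) : ℝ≥0∞ :=
  ⨆ A ∈ {A : Finset ℕ | GreedySet f A}, beta f A

/-- Membership in `𝔹`, i.e. `‖f‖_𝔹 < ∞`. -/
def MemB (f : ℕ → ℝ) : Prop := BNorm f < ⊤

/-- Membership in `c₀`. -/
def Memc0 (f : ℕ → ℝ) : Prop := Tendsto f atTop (nhds 0)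

/-- Membership in `𝔹₀`. -/
def MemB0 (f : ℕ → ℝ) : Prop :=
  Memc0 f ∧ ∀ ε : ℝ, 0 < ε → ∃ A : Finset ℕ, GreedySet f A ∧
    ∀ B : Finset ℕ, GreedySet f B → A ⊆ B → beta f B < ENNReal.ofReal ε

/-- The net `(𝟙*_A(f))_{A ∈ 𝒢(f)}`, directed by inclusion, converges to `s`. -/
def GreedyLim (f : ℕ → ℝ) (s : ℝ) : Prop :=
  ∀ ε : ℝ, 0 < ε → ∃ A : Finset ℕ, GreedySet f A ∧
    ∀ B : Finset ℕ, GreedySet f B → A ⊆ B → |oneStar f B - s| < ε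

/-- Membership in `𝔸`. -/
def MemA (f : ℕ → ℝ) : Prop := Memc0 f ∧ ∃ s, GreedyLim f s

/-- `σ_g(f)`, the greedy sum of `f` (junk value `0` if the greedy net does not converge). -/
def sigmaG (f : ℕ → ℝ) : ℝ := if h : ∃ s, GreedyLim f s then h.choose else 0

/-- `‖f‖_𝔸 = sup_{A ∈ 𝒢(f)} |σ_g(f) - 𝟙*_A(f)|`. -/
def ANorm (f : ℕ → ℝ) : ℝ≥0∞ :=
  ⨆ A ∈ {A : Finset ℕ | GreedySet f A}, ENNReal.ofReal |sigmaG f - oneStar f A|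

/-- The series `∑_n f n` converges (in the ordered sense) to `s`. -/
def SeriesLim (f : ℕ → ℝ) (s : ℝ) : Prop :=
  Tendsto (fun m => ∑ n ∈ Finset.range m, f n) atTop (nhds s)

/-- Membership in `𝒔`: the series `∑_n f n` converges. -/
def MemSeries (f : ℕ → ℝ) : Prop := ∃ s, SeriesLim f s

/-- `σ_s(f) = ∑_{n=0}^∞ f n` (junk value `0` if the series does not converge). -/
def sigmaS (f : ℕ → ℝ) : ℝ := if h : ∃ s, SeriesLim f s then h.choose else 0

/-- `‖f‖_𝒔 = sup_m |∑_{n = m}^∞ f n|`, expressed via `σ_s(f)` minus partial sums. -/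
def sNorm (f : ℕ → ℝ) : ℝ≥0∞ :=
  ⨆ m : ℕ, ENNReal.ofReal |sigmaS f - ∑ n ∈ Finset.range m, f n|

/-- `D(f)(m)`: the `m`-th term (for `m ≥ 1`) of the nonincreasing rearrangement of `|f|`,
as an element of `[0,∞]`. -/
def Drearr (f : ℕ → ℝ) (m : ℕ) : ℝ≥0∞ :=
  sInf {t : ℝ≥0∞ | {n : ℕ | t < ENNReal.ofReal |f n|}.Finite ∧
    {n : ℕ | t < ENNReal.ofReal |f n|}.ncard < m}

/-- `ρ_{1,∞}(f,k) = sup_{m ≥ 1} m · D(f)(m+k) ∈ [0,∞]`. Note `ρ_{1,∞}(f,0) = ‖f‖_{1,∞}`. -/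
def rho (f : ℕ → ℝ) (k : ℕ) : ℝ≥0∞ :=
  ⨆ m : ℕ, ⨆ _ : 1 ≤ m, (m : ℝ≥0∞) * Drearr f (m + k)

/-- Membership in `h_{1,∞}`: `lim_m m · D(f)(m) = 0`. -/
def Memh1inf (f : ℕ → ℝ) : Prop :=
  Tendsto (fun m : ℕ => (m : ℝ≥0∞) * Drearr f m) atTop (nhds 0)

/-- A sequence of nonempty finite integer intervals which is right-dominant:
`max J_k < min J_{k+1}` for all `k`. -/
def RightDominant (J : ℕ → Finset ℕ) : Prop :=
  (∀ k : ℕ, ∃ a b : ℕ, a ≤ b ∧ J k = Finset.Icc a b) ∧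
  ∀ k : ℕ, ∀ n ∈ J k, ∀ m ∈ J (k + 1), n < m

/-- `g` is Leibnizian with admissible sequence `J`. -/
def Admissible (g : ℕ → ℝ) (J : ℕ → Finset ℕ) : Prop :=
  RightDominant J ∧
  (∀ n : ℕ, g n ≠ 0 → ∃ k, n ∈ J k) ∧
  (∀ k : ℕ, oneStar g (J (k + 1)) ≤ oneStar g (J k)) ∧
  (∀ k : ℕ, ∀ n ∈ J k, g n ≠ 0 → ∀ m ∈ J (k + 1), g m < g n)

end
section Aux

lemma beta_le_tsum (f : ℕ → ℝ) (A : Finset ℕ) :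
    beta f A ≤ ∑' n, ENNReal.ofReal |f n| := by
  refine iSup_le fun a => iSup_le fun b => ?_
  calc ENNReal.ofReal |oneStar f (Finset.Icc a b \ A)|
      ≤ ENNReal.ofReal (∑ n ∈ Finset.Icc a b \ A, |f n|) :=
        ENNReal.ofReal_le_ofReal (Finset.abs_sum_le_sum_abs _ _)
    _ = ∑ n ∈ Finset.Icc a b \ A, ENNReal.ofReal |f n| :=
        ENNReal.ofReal_sum_of_nonneg (fun n _ => abs_nonneg _)
    _ ≤ ∑' n, ENNReal.ofReal |f n| := ENNReal.sum_le_tsum _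

lemma beta_le_of_bound (f : ℕ → ℝ) (B : Finset ℕ) (t : ℝ)
    (h : ∀ a b : ℕ, |oneStar f (Finset.Icc a b \ B)| ≤ t) :
    beta f B ≤ ENNReal.ofReal t :=
  iSup_le fun a => iSup_le fun b => ENNReal.ofReal_le_ofReal (h a b)

end Aux

/-- `‖f‖_𝔹 ≤ ∑_n |f n|` in `[0,∞]`; with equality `‖f‖_𝔹 = ∑_n f n`
when `f` is nonnegative; and `ℓ₁ ⊆ 𝔹₀`. -/

theorem stmt_5 (f : ℕ → ℝ) :
    BNorm f ≤ ∑' n, ENNReal.ofReal |f n| ∧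
    ((∀ n, 0 ≤ f n) → BNorm f = ∑' n, ENNReal.ofReal (f n)) ∧
    ((Summable fun n => |f n|) → MemB0 f) := by
  classical
  have hle : BNorm f ≤ ∑' n, ENNReal.ofReal |f n| := by
    refine iSup_le fun A => iSup_le fun _ => beta_le_tsum f A
  refine ⟨hle, ?_, ?_⟩
  · intro hf
    have habs : ∀ n, |f n| = f n := fun n => abs_of_nonneg (hf n)
    refine le_antisymm ?_ ?_
    · calc BNorm f ≤ ∑' n, ENNReal.ofReal |f n| := hle
        _ = ∑' n, ENNReal.ofReal (f n) := by simp [habs]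
    · rw [ENNReal.tsum_eq_iSup_nat]
      refine iSup_le fun m => ?_
      rcases Nat.eq_zero_or_pos m with rfl | hm
      · simp
      · obtain ⟨b, rfl⟩ := Nat.exists_eq_add_of_le hm
        have hIcc : Finset.range (1 + b) = Finset.Icc 0 b := by
          ext n; simp [Nat.lt_succ_iff, Nat.add_comm 1 b, Nat.lt_add_one_iff]
        have hsum : ∑ a ∈ Finset.range (1 + b), ENNReal.ofReal (f a)
            = ENNReal.ofReal |oneStar f (Finset.Icc 0 b \ (∅ : Finset ℕ))| := by
          rw [← ENNReal.ofReal_sum_of_nonneg (fun n _ => hf n)]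
          congr 1
          rw [Finset.sdiff_empty, oneStar, ← hIcc,
            abs_of_nonneg (Finset.sum_nonneg fun n _ => hf n)]
        rw [hsum]
        have h1 : ENNReal.ofReal |oneStar f (Finset.Icc 0 b \ (∅ : Finset ℕ))|
            ≤ beta f (∅ : Finset ℕ) := by
          refine le_trans ?_ (le_iSup _ 0)
          exact le_iSup (fun b' => ENNReal.ofReal
            |oneStar f (Finset.Icc 0 b' \ (∅ : Finset ℕ))|) b
        refine h1.trans ?_
        have hg : GreedySet f (∅ : Finset ℕ) := fun n hn => absurd hn (by simp)
        exact le_iSup₂ (f := fun (A : Finset ℕ) (_ : A ∈ {A : Finset ℕ | GreedySet f A}) => beta f A) ∅ hg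
  · intro hsum
    have hsf : Summable f := summable_abs_iff.mp hsum
    refine ⟨hsf.tendsto_atTop_zero, ?_⟩
    intro ε hε
    -- choose N with tail sum < ε
    have htail : Tendsto (fun N => ∑' k, |f (k + N)|) atTop (nhds 0) := by
      simpa using tendsto_sum_nat_add (fun n => |f n|)
    obtain ⟨N, hN⟩ := (htail.eventually (gt_mem_nhds hε)).exists
    -- c : positive threshold below all nonzero |f n|, n < N
    set T : Finset ℝ :=
      insert 1 (((Finset.range N).filter (fun n => f n ≠ 0)).image (fun n => |f n|)) with hT
    have hTne : T.Nonempty := ⟨1, Finset.mem_insert_self _ _⟩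
    set c : ℝ := T.min' hTne with hc
    have hcpos : 0 < c := by
      have := T.min'_mem hTne
      rw [← hc] at this
      rcases Finset.mem_insert.mp this with h | h
      · rw [h]; norm_num
      · obtain ⟨n, hn, hfn⟩ := Finset.mem_image.mp h
        rw [← hfn]
        exact abs_pos.mpr (Finset.mem_filter.mp hn).2
    have hcle : ∀ n < N, f n ≠ 0 → c ≤ |f n| := by
      intro n hn hfn
      exact T.min'_le _ (Finset.mem_insert_of_mem
        (Finset.mem_image_of_mem _ (Finset.mem_filter.mpr ⟨Finset.mem_range.mpr hn, hfn⟩)))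
    -- choose M past which |f| < c
    have hsmall : ∀ᶠ n in atTop, |f n| < c := by
      have := hsf.tendsto_atTop_zero
      have := Metric.tendsto_atTop.mp this c hcpos
      obtain ⟨M, hM⟩ := this
      exact Filter.eventually_atTop.mpr ⟨M, fun n hn => by
        simpa [Real.dist_eq] using hM n hn⟩
    obtain ⟨M, hM⟩ := Filter.eventually_atTop.mp hsmall
    set A : Finset ℕ := (Finset.range (max M N)).filter (fun n => c ≤ |f n|) with hA
    have hAg : GreedySet f A := by
      intro n hn k hk
      have hn' := (Finset.mem_filter.mp hn).2
      have hk' : |f k| < c := by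
        by_cases hkM : k < max M N
        · by_contra h
          exact hk (Finset.mem_filter.mpr ⟨Finset.mem_range.mpr hkM, not_lt.mp h⟩)
        · exact hM k (le_trans (le_max_left M N) (not_lt.mp hkM))
      exact le_trans hk'.le hn'
    refine ⟨A, hAg, fun B _ hAB => ?_⟩
    have key : ∀ a b : ℕ, |oneStar f (Finset.Icc a b \ B)| ≤ ∑' k, |f (k + N)| := by
      intro a b
      set S := Finset.Icc a b \ B with hS
      have hSmem : ∀ n ∈ S, n < N → f n = 0 := by
        intro n hn hnN
        by_contra h
        have hnA : n ∈ A := Finset.mem_filter.mpr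
          ⟨Finset.mem_range.mpr (lt_of_lt_of_le hnN (le_max_right M N)), hcle n hnN h⟩
        exact (Finset.mem_sdiff.mp hn).2 (hAB hnA)
      set S' := S.filter (fun n => N ≤ n) with hS'
      have h1 : ∑ n ∈ S, |f n| = ∑ n ∈ S', |f n| := by
        refine (Finset.sum_subset (Finset.filter_subset _ _) ?_).symm
        intro n hn hn'
        have : n < N := by
          by_contra h
          exact hn' (Finset.mem_filter.mpr ⟨hn, not_lt.mp h⟩)
        simp [hSmem n hn this]
      have h2 : ∑ n ∈ S', |f n| = ∑ m ∈ S'.image (fun n => n - N), |f (m + N)| := by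
        rw [Finset.sum_image]
        · refine Finset.sum_congr rfl fun n hn => ?_
          have hnN : N ≤ n := (Finset.mem_filter.mp hn).2
          rw [Nat.sub_add_cancel hnN]
        · intro x hx y hy hxy
          have hxN : N ≤ x := (Finset.mem_filter.mp hx).2
          have hyN : N ≤ y := (Finset.mem_filter.mp hy).2
          simp only at hxy
          omega
      have h3 : ∑ m ∈ S'.image (fun n => n - N), |f (m + N)| ≤ ∑' k, |f (k + N)| := by
        refine Summable.sum_le_tsum _ (fun m _ => abs_nonneg _) ?_
        exact (summable_nat_add_iff N).mpr hsum
      calc |oneStar f S| ≤ ∑ n ∈ S, |f n| := Finset.abs_sum_le_sum_abs _ _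
        _ ≤ ∑' k, |f (k + N)| := by rw [h1, h2]; exact h3
    calc beta f B ≤ ENNReal.ofReal (∑' k, |f (k + N)|) := beta_le_of_bound f B _ key
      _ < ENNReal.ofReal ε := (ENNReal.ofReal_lt_ofReal_iff hε).mpr hN
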